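/- Let k ≥ 3 be an odd integer, let c > 0, and let a_1 < a_2 < ⋯ < a_k be distinct real numbers. Consider the homogeneous linear system in (A_1, …, A_k) ∈ ℝ^k given by Σ_{j=1}^{k} A_j · a_j^l · exp(δ·c·a_j) = 0 for all l ∈ {0, 1, …, (k−3)/2} and δ ∈ {−1, +1} (a (k−1) × k system). Then the solution space of this system is exactly one-dimensional: there does not exist two linearly independent solutions, and a nonzero solution exists. -/

import Mathlib

open Polynomial Real Set Matrix

private lemma rolle_step {N : ℕ} {f f' : ℝ → ℝ} (hf : ∀ t, HasDerivAt f (f' t) t)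
    (x : Fin (N + 1) → ℝ) (hx : StrictMono x) (h0 : ∀ i, f (x i) = 0) :
    ∃ y : Fin N → ℝ, StrictMono y ∧ ∀ i, f' (y i) = 0 := by
  have hcont : Continuous f := by
    have : Differentiable ℝ f := fun t => (hf t).differentiableAt
    exact this.continuous
  have H : ∀ i : Fin N, ∃ t ∈ Ioo (x i.castSucc) (x i.succ), f' t = 0 := by
    intro i
    have hlt : x i.castSucc < x i.succ := hx (Fin.castSucc_lt_succ (i := i))
    exact exists_hasDerivAt_eq_zero hlt hcont.continuousOn
      (by rw [h0, h0]) (fun t _ => hf t)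
  choose y hy hy0 using H
  refine ⟨y, ?_, hy0⟩
  intro i j hij
  have h1 : y i < x i.succ := (hy i).2
  have h2 : x j.castSucc < y j := (hy j).1
  have h3 : x i.succ ≤ x j.castSucc := by
    apply hx.monotone
    rw [Fin.le_def]
    simp only [Fin.val_succ, Fin.coe_castSucc]
    omega
  linarith

/-- a polynomial vanishing at more than `natDegree` strictly monotone points is zero -/
private lemma poly_eq_zero_of_eval {P : ℝ[X]} {N : ℕ} (x : Fin N → ℝ) (hx : StrictMono x)
    (h0 : ∀ i, P.eval (x i) = 0) (hN : P.natDegree < N) : P = 0 :=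
  P.eq_zero_of_natDegree_lt_card_of_eval_eq_zero hx.injective h0 (by simpa using hN)

private lemma hasDerivAt_expPoly (P Q : ℝ[X]) (lam : ℝ) (t : ℝ) :
    HasDerivAt (fun s => P.eval s + Q.eval s * Real.exp (lam * s))
      (P.derivative.eval t +
        (Q.derivative + lam • Q).eval t * Real.exp (lam * t)) t := by
  have h1 : HasDerivAt (fun s => Real.exp (lam * s)) (lam * Real.exp (lam * t)) t := by
    have := ((hasDerivAt_id t).const_mul lam).exp
    simpa [mul_comm] using this
  have h2 := (P.hasDerivAt t).add ((Q.hasDerivAt t).mul h1)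
  refine h2.congr_deriv ?_
  simp only [Polynomial.eval_add, Polynomial.eval_smul, smul_eq_mul]
  ring

/-- Key lemma: `P + Q·e^{λx}` vanishing at `deg P + deg Q + 2` increasing points forces
`P = Q = 0`. -/
private lemma key_expPoly (lam : ℝ) (hlam : lam ≠ 0) :
    ∀ n : ℕ, ∀ P Q : ℝ[X], P.natDegree ≤ n →
      ∀ N : ℕ, P.natDegree + Q.natDegree + 2 ≤ N →
      ∀ x : Fin N → ℝ, StrictMono x →
      (∀ i, P.eval (x i) + Q.eval (x i) * Real.exp (lam * x i) = 0) →
      P = 0 ∧ Q = 0 := by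
  intro n
  induction n with
  | zero =>
    intro P Q hP N hN x hx h0
    have hPc : P = C (P.coeff 0) := Polynomial.eq_C_of_natDegree_le_zero hP
    by_cases hp : P.coeff 0 = 0
    · have hP0 : P = 0 := by rw [hPc, hp, map_zero]
      refine ⟨hP0, ?_⟩
      have hQ0 : ∀ i, Q.eval (x i) = 0 := by
        intro i
        have := h0 i
        rw [hP0] at this
        simp only [Polynomial.eval_zero, zero_add] at this
        exact (mul_eq_zero.mp this).resolve_right (Real.exp_ne_zero _)
      exact poly_eq_zero_of_eval x hx hQ0 (by omega)
    · exfalso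
      obtain ⟨N', rfl⟩ : ∃ N', N = N' + 1 := ⟨N - 1, by omega⟩
      obtain ⟨y, hy, hy0⟩ := rolle_step (fun t => hasDerivAt_expPoly P Q lam t) x hx h0
      have hPd : P.derivative = 0 := by rw [hPc]; simp
      set Q1 := Q.derivative + lam • Q with hQ1def
      have hQ1 : ∀ i, Q1.eval (y i) = 0 := by
        intro i
        have := hy0 i
        rw [hPd] at this
        simp only [Polynomial.eval_zero, zero_add] at this
        exact (mul_eq_zero.mp this).resolve_right (Real.exp_ne_zero _)
      have hQ1deg : Q1.natDegree ≤ Q.natDegree := by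
        apply le_trans (Polynomial.natDegree_add_le _ _)
        simp [max_le_iff]
        exact le_trans (Polynomial.natDegree_smul_le _ _) le_rfl
      have hQ1z : Q1 = 0 := poly_eq_zero_of_eval y hy hQ1 (by omega)
      have hQz : Q = 0 := by
        by_contra hQ
        have hcd : Q.derivative.coeff Q.natDegree = 0 := by
          apply Polynomial.coeff_eq_zero_of_degree_lt
          calc Q.derivative.degree < Q.degree := Polynomial.degree_derivative_lt hQ
            _ = (Q.natDegree : WithBot ℕ) := Polynomial.degree_eq_natDegree hQ
        have hlc : Q1.coeff Q.natDegree = lam * Q.coeff Q.natDegree := by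
          rw [hQ1def, Polynomial.coeff_add, Polynomial.coeff_smul, hcd, zero_add,
            smul_eq_mul]
        rw [hQ1z, Polynomial.coeff_zero] at hlc
        have h0' : Q.coeff Q.natDegree = 0 :=
          (mul_eq_zero.mp hlc.symm).resolve_left hlam
        exact hQ (Polynomial.leadingCoeff_eq_zero.mp h0')
      have := h0 0
      rw [hQz] at this
      simp at this
      rw [hPc] at this
      simp at this
      exact hp this
  | succ n ih =>
    intro P Q hP N hN x hx h0
    by_cases hPn : P.natDegree ≤ n
    · exact ih P Q hPn N (by omega) x hx h0
    · exfalso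
      have hPdeg : P.natDegree = n + 1 := by omega
      obtain ⟨N', rfl⟩ : ∃ N', N = N' + 1 := ⟨N - 1, by omega⟩
      obtain ⟨y, hy, hy0⟩ := rolle_step (fun t => hasDerivAt_expPoly P Q lam t) x hx h0
      set Q1 := Q.derivative + lam • Q with hQ1def
      have hQ1deg : Q1.natDegree ≤ Q.natDegree := by
        apply le_trans (Polynomial.natDegree_add_le _ _)
        simp [max_le_iff]
        exact le_trans (Polynomial.natDegree_smul_le _ _) le_rfl
      have hPd : P.derivative.natDegree ≤ n :=
        le_trans P.natDegree_derivative_le (by omega)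
      obtain ⟨hP'z, _⟩ := ih P.derivative Q1 hPd N' (by omega) y hy hy0
      have : P.natDegree = 0 := Polynomial.natDegree_eq_zero_of_derivative_eq_zero hP'z
      omega

private lemma coeff_sum_CXpow {m : ℕ} (w : Fin m → ℝ) (i : Fin m) :
    (∑ l : Fin m, Polynomial.C (w l) * Polynomial.X ^ (l : ℕ)).coeff (i : ℕ) = w i := by
  rw [Polynomial.finset_sum_coeff]
  simp only [Polynomial.coeff_C_mul, Polynomial.coeff_X_pow, Fin.val_eq_val,
    mul_ite, mul_one, mul_zero]
  simp

/-- For odd `k ≥ 3`, `c > 0`, and points `a_1 < ⋯ < a_k`, the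
`(k-1) × k` homogeneous system `∑_j A_j a_j^l exp(δ c a_j) = 0`
(`l = 0, …, (k-3)/2`, `δ = ±1`) has a one-dimensional solution space: a nonzero
solution exists and any two solutions are linearly dependent. -/
theorem kernel_packet_system_solution_space_one_dimensional
    (k : ℕ) (hk3 : 3 ≤ k) (hkodd : Odd k) (c : ℝ) (hc : 0 < c)
    (a : Fin k → ℝ) (ha : StrictMono a) :
    (∃ A : Fin k → ℝ, A ≠ 0 ∧
      ∀ l ≤ (k - 3) / 2, ∀ δ : ℝ, (δ = 1 ∨ δ = -1) →
        ∑ j, A j * a j ^ l * Real.exp (δ * c * a j) = 0) ∧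
    (∀ A B : Fin k → ℝ,
      (∀ l ≤ (k - 3) / 2, ∀ δ : ℝ, (δ = 1 ∨ δ = -1) →
        ∑ j, A j * a j ^ l * Real.exp (δ * c * a j) = 0) →
      (∀ l ≤ (k - 3) / 2, ∀ δ : ℝ, (δ = 1 ∨ δ = -1) →
        ∑ j, B j * a j ^ l * Real.exp (δ * c * a j) = 0) →
      ∃ α β : ℝ, ¬(α = 0 ∧ β = 0) ∧ α • A + β • B = 0) := by
  obtain ⟨m, hm⟩ : ∃ m, k = 2 * m + 1 := by
    obtain ⟨t, ht⟩ := hkodd; exact ⟨t, by omega⟩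
  subst hm
  have hm1 : 1 ≤ m := by omega
  set M : Matrix (Fin m × Bool) (Fin (2 * m + 1)) ℝ :=
    fun r j => a j ^ (r.1 : ℕ) * Real.exp ((if r.2 then (1:ℝ) else -1) * c * a j) with hM
  -- the transpose has trivial kernel (Chebyshev system property)
  have hinj : Function.Injective Mᵀ.mulVecLin := by
    rw [← LinearMap.ker_eq_bot, LinearMap.ker_eq_bot']
    intro v hv
    set P : ℝ[X] := ∑ l : Fin m, Polynomial.C (v (l, true)) * Polynomial.X ^ (l : ℕ) with hP
    set Q : ℝ[X] := ∑ l : Fin m, Polynomial.C (v (l, false)) * Polynomial.X ^ (l : ℕ) with hQ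
    have hPdeg : P.natDegree ≤ m - 1 := by
      apply Polynomial.natDegree_sum_le_of_forall_le
      intro l _
      refine le_trans (Polynomial.natDegree_C_mul_le _ _) ?_
      rw [Polynomial.natDegree_X_pow]
      omega
    have hQdeg : Q.natDegree ≤ m - 1 := by
      apply Polynomial.natDegree_sum_le_of_forall_le
      intro l _
      refine le_trans (Polynomial.natDegree_C_mul_le _ _) ?_
      rw [Polynomial.natDegree_X_pow]
      omega
    have hzero : ∀ j, Q.eval (a j) + P.eval (a j) * Real.exp ((2 * c) * a j) = 0 := by
      intro j
      have h1 : (∑ r : Fin m × Bool, v r * M r j) = 0 := by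
        have := congrFun hv j
        simpa [Matrix.mulVecLin_apply, Matrix.mulVec, Matrix.vecMul,
          dotProduct, Matrix.transpose_apply] using this
      have hexp2 : Real.exp ((2 * c) * a j)
          = Real.exp (c * a j) * Real.exp (c * a j) := by
        rw [← Real.exp_add]; ring_nf
      have hexpn : Real.exp (-(c * a j)) * Real.exp (c * a j) = 1 := by
        rw [← Real.exp_add]; ring_nf; exact Real.exp_zero
      calc Q.eval (a j) + P.eval (a j) * Real.exp ((2 * c) * a j)
          = Real.exp (c * a j) * ∑ r : Fin m × Bool, v r * M r j := by
            rw [Fintype.sum_prod_type, Finset.mul_sum]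
            rw [hP, hQ]
            simp only [Polynomial.eval_finset_sum, Polynomial.eval_mul,
              Polynomial.eval_C, Polynomial.eval_pow, Polynomial.eval_X,
              Finset.sum_mul]
            rw [← Finset.sum_add_distrib]
            refine Finset.sum_congr rfl fun l _ => ?_
            simp only [hM, Fintype.sum_bool]
            norm_num
            have h5 : Real.exp (c * a j) * Real.exp (-(c * a j)) = 1 := by
              rw [mul_comm]; exact hexpn
            rw [hexp2]
            linear_combination (-(v (l, false) * a j ^ (l : ℕ))) * h5
        _ = 0 := by rw [h1, mul_zero]
    have hN : Q.natDegree + P.natDegree + 2 ≤ 2 * m + 1 := by omega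
    obtain ⟨hQz, hPz⟩ := key_expPoly (2 * c) (by positivity) Q.natDegree Q P le_rfl
      (2 * m + 1) hN a ha hzero
    funext r
    obtain ⟨l, b⟩ := r
    cases b
    · have := coeff_sum_CXpow (fun l => v (l, false)) l
      rw [← hQ, hQz, Polynomial.coeff_zero] at this
      exact this.symm
    · have := coeff_sum_CXpow (fun l => v (l, true)) l
      rw [← hP, hPz, Polynomial.coeff_zero] at this
      exact this.symm
  -- rank computations
  have hcard : Fintype.card (Fin m × Bool) = 2 * m := by simp [Fintype.card_prod]; ring
  have hrankT : Mᵀ.rank = 2 * m := by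
    rw [Matrix.rank, LinearMap.finrank_range_of_inj hinj,
      Module.finrank_fintype_fun_eq_card, hcard]
  have hrank : M.rank = 2 * m := by rw [← Matrix.rank_transpose, hrankT]
  have hker : Module.finrank ℝ (LinearMap.ker M.mulVecLin) = 1 := by
    have h := LinearMap.finrank_range_add_finrank_ker M.mulVecLin
    rw [Module.finrank_fintype_fun_eq_card, Fintype.card_fin] at h
    have h2 : M.rank = Module.finrank ℝ (LinearMap.range M.mulVecLin) := rfl
    omega
  -- relating the system to the kernel
  have hiff : ∀ A : Fin (2 * m + 1) → ℝ,
      (∀ l ≤ (2 * m + 1 - 3) / 2, ∀ δ : ℝ, (δ = 1 ∨ δ = -1) →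
        ∑ j, A j * a j ^ l * Real.exp (δ * c * a j) = 0)
      ↔ A ∈ LinearMap.ker M.mulVecLin := by
    intro A
    rw [LinearMap.mem_ker, Matrix.mulVecLin_apply]
    constructor
    · intro h
      funext r
      obtain ⟨l, b⟩ := r
      have hl : (l : ℕ) ≤ (2 * m + 1 - 3) / 2 := by have := l.isLt; omega
      have hδ : (if b then (1:ℝ) else -1) = 1 ∨ (if b then (1:ℝ) else -1) = -1 := by
        cases b <;> simp
      have h2 := h l hl _ hδ
      have e : M.mulVec A (l, b)
          = ∑ j, A j * a j ^ (l : ℕ) * Real.exp ((if b then (1:ℝ) else -1) * c * a j) := by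
        simp only [Matrix.mulVec, dotProduct, hM]
        exact Finset.sum_congr rfl fun j _ => by ring
      rw [Pi.zero_apply, e, h2]
    · intro h l hl δ hδ
      have hlm : l < m := by omega
      have hb : ∃ b : Bool, δ = (if b then (1:ℝ) else -1) := by
        rcases hδ with rfl | rfl
        · exact ⟨true, by simp⟩
        · exact ⟨false, by simp⟩
      obtain ⟨b, rfl⟩ := hb
      have h2 := congrFun h (⟨l, hlm⟩, b)
      rw [Pi.zero_apply] at h2
      rw [← h2]
      simp only [Matrix.mulVec, dotProduct, hM]
      exact Finset.sum_congr rfl fun j _ => by ring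
  constructor
  · -- existence of a nonzero solution
    have hne : LinearMap.ker M.mulVecLin ≠ ⊥ := by
      intro hbot
      rw [hbot, finrank_bot] at hker
      omega
    obtain ⟨A, hA, hA0⟩ := Submodule.exists_mem_ne_zero_of_ne_bot hne
    exact ⟨A, hA0, (hiff A).mpr hA⟩
  · -- any two solutions are dependent
    intro A B hA hB
    have hAk : A ∈ LinearMap.ker M.mulVecLin := (hiff A).mp hA
    have hBk : B ∈ LinearMap.ker M.mulVecLin := (hiff B).mp hB
    by_cases hli : LinearIndependent ℝ ![A, B]
    · exfalso
      have hspan : Submodule.span ℝ (Set.range ![A, B]) ≤ LinearMap.ker M.mulVecLin := by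
        rw [Submodule.span_le]
        rintro x ⟨i, rfl⟩
        fin_cases i
        · simpa using hAk
        · simpa using hBk
      have h2 : Module.finrank ℝ (Submodule.span ℝ (Set.range ![A, B])) = 2 := by
        rw [finrank_span_eq_card hli]
        simp
      have h3 := Submodule.finrank_mono hspan
      omega
    · rw [LinearIndependent.pair_iff] at hli
      push_neg at hli
      obtain ⟨s, t, hst, hne⟩ := hli
      exact ⟨s, t, fun h => hne h.1 h.2, hst⟩
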